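/- Let A₀ = diag(√3·I, (1/√3)·I, 0, -(1/√3)·I, -√3·I) (10×10 block diagonal, blocks 2×2, I the 2×2 identity), A₁ the block anti-diagonal matrix with blocks √3·J, (1/√3)·J, 0, -(1/√3)·J, -√3·J where J = [[0,-1],[-1,0]], and A₂ the block anti-diagonal matrix with blocks √3·I, (1/√3)·I, 0, (1/√3)·I, √3·I. Then for X = Σᵢaᵢeᵢ ∈ ℝ¹⁰, 9|X|² - |A₀X|² - |A₁X|² - |A₂X|² = 8(a₃² + a₄² + a₇² + a₈²) + 9(a₅² + a₆²), which is non-negative. -/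

import Mathlib

open Matrix

noncomputable def B₀ : Matrix (Fin 10) (Fin 10) ℝ :=
  Matrix.diagonal ![Real.sqrt 3, Real.sqrt 3, 1 / Real.sqrt 3, 1 / Real.sqrt 3, 0, 0,
    -(1 / Real.sqrt 3), -(1 / Real.sqrt 3), -Real.sqrt 3, -Real.sqrt 3]

/-- Block anti-diagonal with blocks `√3·J, (1/√3)·J, 0, -(1/√3)·J, -√3·J`, `J = [[0,-1],[-1,0]]`. -/
noncomputable def B₁ : Matrix (Fin 10) (Fin 10) ℝ :=
  !![0,0,0,0,0,0,0,0,0,-Real.sqrt 3;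
     0,0,0,0,0,0,0,0,-Real.sqrt 3,0;
     0,0,0,0,0,0,0,-(1/Real.sqrt 3),0,0;
     0,0,0,0,0,0,-(1/Real.sqrt 3),0,0,0;
     0,0,0,0,0,0,0,0,0,0;
     0,0,0,0,0,0,0,0,0,0;
     0,0,0,1/Real.sqrt 3,0,0,0,0,0,0;
     0,0,1/Real.sqrt 3,0,0,0,0,0,0,0;
     0,Real.sqrt 3,0,0,0,0,0,0,0,0;
     Real.sqrt 3,0,0,0,0,0,0,0,0,0]

/-- Block anti-diagonal with blocks `√3·I, (1/√3)·I, 0, (1/√3)·I, √3·I`. -/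
noncomputable def B₂ : Matrix (Fin 10) (Fin 10) ℝ :=
  !![0,0,0,0,0,0,0,0,Real.sqrt 3,0;
     0,0,0,0,0,0,0,0,0,Real.sqrt 3;
     0,0,0,0,0,0,1/Real.sqrt 3,0,0,0;
     0,0,0,0,0,0,0,1/Real.sqrt 3,0,0;
     0,0,0,0,0,0,0,0,0,0;
     0,0,0,0,0,0,0,0,0,0;
     0,0,1/Real.sqrt 3,0,0,0,0,0,0,0;
     0,0,0,1/Real.sqrt 3,0,0,0,0,0,0;
     Real.sqrt 3,0,0,0,0,0,0,0,0,0;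
     0,Real.sqrt 3,0,0,0,0,0,0,0,0]

theorem stmt16 (a : Fin 10 → ℝ) :
    9 * (a ⬝ᵥ a) - (B₀.mulVec a ⬝ᵥ B₀.mulVec a) - (B₁.mulVec a ⬝ᵥ B₁.mulVec a)
        - (B₂.mulVec a ⬝ᵥ B₂.mulVec a)
      = 8 * (a 2 ^ 2 + a 3 ^ 2 + a 6 ^ 2 + a 7 ^ 2) + 9 * (a 4 ^ 2 + a 5 ^ 2) ∧
    0 ≤ 9 * (a ⬝ᵥ a) - (B₀.mulVec a ⬝ᵥ B₀.mulVec a) - (B₁.mulVec a ⬝ᵥ B₁.mulVec a)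
        - (B₂.mulVec a ⬝ᵥ B₂.mulVec a) := by

  have hs : Real.sqrt 3 ^ 2 = 3 := Real.sq_sqrt (by norm_num)
  have hs0 : Real.sqrt 3 ≠ 0 := by positivity
  have key : 9 * (a ⬝ᵥ a) - (B₀.mulVec a ⬝ᵥ B₀.mulVec a) - (B₁.mulVec a ⬝ᵥ B₁.mulVec a)
        - (B₂.mulVec a ⬝ᵥ B₂.mulVec a)
      = 8 * (a 2 ^ 2 + a 3 ^ 2 + a 6 ^ 2 + a 7 ^ 2) + 9 * (a 4 ^ 2 + a 5 ^ 2) := by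
    simp only [B₀, B₁, B₂, Matrix.mulVec, dotProduct, Fin.sum_univ_succ, Fin.sum_univ_zero,
      Matrix.diagonal, Matrix.of_apply, Matrix.cons_val', Matrix.cons_val_zero,
      Matrix.cons_val_one, Matrix.head_cons, Matrix.empty_val', Matrix.cons_val_fin_one,
      Matrix.head_fin_const, Matrix.cons_val_succ]
    norm_num [Fin.ext_iff]
    field_simp
    ring_nf
    simp only [show ((Fin.succ 2 : Fin 10)) = 3 from rfl,
      show ((Fin.succ 2).succ : Fin 10) = 4 from rfl,
      show ((Fin.succ 2).succ.succ : Fin 10) = 5 from rfl,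
      show ((Fin.succ 2).succ.succ.succ : Fin 10) = 6 from rfl,
      show ((Fin.succ 2).succ.succ.succ.succ : Fin 10) = 7 from rfl,
      show ((Fin.succ 2).succ.succ.succ.succ.succ : Fin 10) = 8 from rfl,
      show ((Fin.succ 2).succ.succ.succ.succ.succ.succ : Fin 10) = 9 from rfl]
    rw [show Real.sqrt 3 ^ 4 = (Real.sqrt 3 ^ 2) ^ 2 by ring, hs]
    ring
  exact ⟨key, key ▸ by positivity⟩
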